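/- Let A_i = Φ Ā_i Ψᵀ for i = 1,…,m with Φ, Ψ orthogonal and Ā_i rectangular diagonal with nonnegative diagonals σ^{(i)} ∈ ℝ^{d1}. Suppose there exist reals a_1,…,a_m with Σ_i a_i σ^{(i)} = 𝟙 (the all-ones vector). Let X* ∈ ℝ^{d1×d2}, σ* = diag(Φᵀ X* Ψ) with all entries positive, y_i = ⟨A_i, X*⟩, and X∞ = Φ Diag(σ*) Ψᵀ. Then X∞ is a global minimizer of the nuclear norm over all X ∈ ℝ^{d1×d2} satisfying ⟨A_i, X⟩ = y_i for all i. -/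

import Mathlib

open Matrix

/-- The nuclear norm of a real matrix: the sum of its singular values. -/
noncomputable def nuclearNorm {d1 d2 : ℕ} (X : Matrix (Fin d1) (Fin d2) ℝ) : ℝ :=
  ∑ i : Fin d1, Real.sqrt ((Matrix.posSemidef_self_mul_conjTranspose X).1.eigenvalues i)

/-- The rectangular diagonal matrix in `ℝ^{d1×d2}` with diagonal vector `v`. -/
def rectDiag {d1 d2 : ℕ} (v : Fin d1 → ℝ) : Matrix (Fin d1) (Fin d2) ℝ :=
  Matrix.of fun i j => if (i : ℕ) = (j : ℕ) then v i else 0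

open Polynomial in
/-- Charpoly is invariant under orthogonal conjugation. -/
lemma aux_charpoly_orth_conj {d : ℕ} (B D : Matrix (Fin d) (Fin d) ℝ)
    (hB : Bᵀ * B = 1) : (B * D * Bᵀ).charpoly = D.charpoly := by
  have hB' : B * Bᵀ = 1 := mul_eq_one_comm.mp hB
  have hmap : (B.map C) * (Bᵀ.map C) = 1 := by
    rw [← Matrix.map_mul, hB', Matrix.map_one _ (map_zero C) (map_one C)]
  have hmap' : (Bᵀ.map C) * (B.map C) = 1 := by
    rw [← Matrix.map_mul, hB, Matrix.map_one _ (map_zero C) (map_one C)]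
  have key : charmatrix (B * D * Bᵀ) = (B.map C) * charmatrix D * (Bᵀ.map C) := by
    unfold charmatrix
    rw [Matrix.mul_sub, Matrix.sub_mul]
    congr 1
    · -- B.map C * scalar X * Bᵀ.map C = scalar X
      rw [Matrix.scalar_apply, ← Matrix.smul_one_eq_diagonal, Matrix.mul_smul, Matrix.mul_one,
        Matrix.smul_mul, hmap]
    · simp only [RingHom.mapMatrix_apply]
      rw [Matrix.map_mul, Matrix.map_mul]
  rw [Matrix.charpoly, key, Matrix.charpoly]
  rw [Matrix.det_mul, Matrix.det_mul]
  have : (B.map C).det * (Bᵀ.map C).det = 1 := by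
    rw [← Matrix.det_mul, hmap, Matrix.det_one]
  calc (B.map C).det * (charmatrix D).det * (Bᵀ.map C).det
      = (charmatrix D).det * ((B.map C).det * (Bᵀ.map C).det) := by ring
    _ = (charmatrix D).det := by rw [this, mul_one]

open Polynomial in
lemma aux_charpoly_diagonal {d : ℕ} (μ : Fin d → ℝ) :
    (Matrix.diagonal μ).charpoly = ∏ i : Fin d, (X - C (μ i)) := by
  have : charmatrix (Matrix.diagonal μ) = Matrix.diagonal (fun i => X - C (μ i)) := by
    ext i j
    by_cases h : i = j
    · subst h; simp [charmatrix_apply_eq]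
    · simp [charmatrix_apply_ne _ _ _ h, Matrix.diagonal_apply_ne _ h]
  rw [Matrix.charpoly, this, Matrix.det_diagonal]

open Polynomial in
/-- The eigenvalue multiset of `B * diagonal μ * Bᵀ` is the multiset of `μ`. -/
lemma aux_eig_multiset {d : ℕ} (B : Matrix (Fin d) (Fin d) ℝ) (μ : Fin d → ℝ)
    (hB : Bᵀ * B = 1) {H : Matrix (Fin d) (Fin d) ℝ} (hH : H.IsHermitian)
    (hHeq : H = B * Matrix.diagonal μ * Bᵀ) :
    Finset.univ.val.map hH.eigenvalues = Finset.univ.val.map μ := by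
  have U := hH.eigenvectorUnitary
  set V : Matrix (Fin d) (Fin d) ℝ := (hH.eigenvectorUnitary : Matrix (Fin d) (Fin d) ℝ) with hV
  have hVmem := hH.eigenvectorUnitary.2
  have hVunit : Vᵀ * V = 1 := by
    have h := (Unitary.mem_iff.mp hVmem).1
    simp only [Matrix.star_eq_conjTranspose,
      Matrix.conjTranspose_eq_transpose_of_trivial] at h
    exact h
  have hspec : H = V * Matrix.diagonal hH.eigenvalues * Vᵀ := by
    have h := hH.spectral_theorem
    simp only [Matrix.star_eq_conjTranspose, Matrix.conjTranspose_eq_transpose_of_trivial,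
      RCLike.ofReal_real_eq_id, Function.id_comp] at h
    exact h
  have h1 : H.charpoly = ∏ i : Fin d, (X - C (hH.eigenvalues i)) := by
    rw [congrArg Matrix.charpoly hspec, aux_charpoly_orth_conj _ _ hVunit,
      aux_charpoly_diagonal]
  have h2 : H.charpoly = ∏ i : Fin d, (X - C (μ i)) := by
    rw [hHeq, aux_charpoly_orth_conj _ _ hB, aux_charpoly_diagonal]
  have hprod : ((Finset.univ.val.map hH.eigenvalues).map (fun a => X - C a)).prod
      = ((Finset.univ.val.map μ).map (fun a => X - C a)).prod := by
    rw [Multiset.map_map, Multiset.map_map]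
    calc ((Finset.univ.val.map (fun i => X - C (hH.eigenvalues i)))).prod
        = ∏ i : Fin d, (X - C (hH.eigenvalues i)) := rfl
      _ = ∏ i : Fin d, (X - C (μ i)) := h1.symm.trans h2
      _ = ((Finset.univ.val.map (fun i => X - C (μ i)))).prod := rfl
  have := congrArg Polynomial.roots hprod
  rwa [Polynomial.roots_multiset_prod_X_sub_C, Polynomial.roots_multiset_prod_X_sub_C] at this

/-- Key Cauchy–Schwarz inequality for the diagonal sum. -/
lemma aux_key_ineq {d1 d2 : ℕ} (hd : d1 ≤ d2) (P : Matrix (Fin d1) (Fin d1) ℝ)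
    (Q : Matrix (Fin d1) (Fin d2) ℝ) (hP : Pᵀ * P = 1) :
    ∑ j : Fin d1, (P * Q) j (Fin.castLE hd j) ≤
      ∑ k : Fin d1, Real.sqrt ((Q * Qᵀ) k k) := by
  have colP : ∀ k : Fin d1, ∑ j : Fin d1, (P j k) ^ 2 = 1 := by
    intro k
    have h := congrFun (congrFun hP k) k
    simpa [Matrix.mul_apply, Matrix.one_apply, sq] using h
  calc ∑ j : Fin d1, (P * Q) j (Fin.castLE hd j)
      = ∑ j : Fin d1, ∑ k : Fin d1, P j k * Q k (Fin.castLE hd j) := by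
        simp [Matrix.mul_apply]
    _ = ∑ k : Fin d1, ∑ j : Fin d1, P j k * Q k (Fin.castLE hd j) := Finset.sum_comm
    _ ≤ ∑ k : Fin d1, Real.sqrt ((Q * Qᵀ) k k) := by
        apply Finset.sum_le_sum
        intro k _
        have hQkk : (Q * Qᵀ) k k = ∑ l : Fin d2, (Q k l) ^ 2 := by
          simp [Matrix.mul_apply, sq]
        have hsub : ∑ j : Fin d1, (Q k (Fin.castLE hd j)) ^ 2 ≤ (Q * Qᵀ) k k := by
          rw [hQkk]
          have himg : ∑ j : Fin d1, (Q k (Fin.castLE hd j)) ^ 2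
              = ∑ l ∈ Finset.univ.image (Fin.castLE hd), (Q k l) ^ 2 := by
            rw [Finset.sum_image (fun a _ b _ h => Fin.castLE_injective hd h)]
          rw [himg]
          exact Finset.sum_le_sum_of_subset_of_nonneg (Finset.subset_univ _)
            (fun _ _ _ => sq_nonneg _)
        have cs := Finset.sum_mul_sq_le_sq_mul_sq Finset.univ (fun j => P j k)
          (fun j => Q k (Fin.castLE hd j))
        rw [colP k, one_mul] at cs
        calc ∑ j : Fin d1, P j k * Q k (Fin.castLE hd j)
            ≤ |∑ j : Fin d1, P j k * Q k (Fin.castLE hd j)| := le_abs_self _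
          _ = Real.sqrt ((∑ j : Fin d1, P j k * Q k (Fin.castLE hd j)) ^ 2) :=
              (Real.sqrt_sq_eq_abs _).symm
          _ ≤ Real.sqrt ((Q * Qᵀ) k k) :=
              Real.sqrt_le_sqrt (cs.trans hsub)

/-- The sum of the rotated diagonal is at most the nuclear norm. -/
lemma aux_diag_le_nuclearNorm {d1 d2 : ℕ} (hd : d1 ≤ d2)
    (Φ : Matrix (Fin d1) (Fin d1) ℝ) (Ψ : Matrix (Fin d2) (Fin d2) ℝ)
    (hΦ : Φᵀ * Φ = 1) (hΨ : Ψᵀ * Ψ = 1) (X : Matrix (Fin d1) (Fin d2) ℝ) :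
    ∑ j : Fin d1, (Φᵀ * X * Ψ) j (Fin.castLE hd j) ≤ nuclearNorm X := by
  have hΦ' : Φ * Φᵀ = 1 := mul_eq_one_comm.mp hΦ
  have hΨ' : Ψ * Ψᵀ = 1 := mul_eq_one_comm.mp hΨ
  set hH := (Matrix.posSemidef_self_mul_conjTranspose X).1 with hHdef
  set V : Matrix (Fin d1) (Fin d1) ℝ := (hH.eigenvectorUnitary : Matrix (Fin d1) (Fin d1) ℝ)
    with hV
  have hVmem := hH.eigenvectorUnitary.2
  have hVunit : Vᵀ * V = 1 := by
    have h := (Unitary.mem_iff.mp hVmem).1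
    simp only [Matrix.star_eq_conjTranspose,
      Matrix.conjTranspose_eq_transpose_of_trivial] at h
    exact h
  have hVunit' : V * Vᵀ = 1 := mul_eq_one_comm.mp hVunit
  have hspec : X * Xᵀ = V * Matrix.diagonal hH.eigenvalues * Vᵀ := by
    have h := hH.spectral_theorem
    simp only [Matrix.star_eq_conjTranspose, Matrix.conjTranspose_eq_transpose_of_trivial,
      RCLike.ofReal_real_eq_id, Function.id_comp] at h
    exact h
  set P : Matrix (Fin d1) (Fin d1) ℝ := Φᵀ * V with hP
  set Q : Matrix (Fin d1) (Fin d2) ℝ := Vᵀ * X * Ψ with hQ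
  have hPQ : P * Q = Φᵀ * X * Ψ := by
    rw [hP, hQ]
    calc Φᵀ * V * (Vᵀ * X * Ψ) = Φᵀ * (V * Vᵀ) * X * Ψ := by
          simp only [Matrix.mul_assoc]
      _ = Φᵀ * X * Ψ := by rw [hVunit', Matrix.mul_one]
  have hPunit : Pᵀ * P = 1 := by
    rw [hP, Matrix.transpose_mul, Matrix.transpose_transpose]
    calc Vᵀ * Φ * (Φᵀ * V) = Vᵀ * (Φ * Φᵀ) * V := by simp only [Matrix.mul_assoc]
      _ = 1 := by rw [hΦ', Matrix.mul_one, hVunit]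
  have hQQ : Q * Qᵀ = Matrix.diagonal hH.eigenvalues := by
    rw [hQ, Matrix.transpose_mul, Matrix.transpose_mul, Matrix.transpose_transpose]
    calc Vᵀ * X * Ψ * (Ψᵀ * (Xᵀ * V)) = Vᵀ * (X * (Ψ * Ψᵀ) * Xᵀ) * V := by
          simp only [Matrix.mul_assoc]
      _ = Vᵀ * (X * Xᵀ) * V := by rw [hΨ', Matrix.mul_one]
      _ = Vᵀ * (V * Matrix.diagonal hH.eigenvalues * Vᵀ) * V := by rw [hspec]
      _ = (Vᵀ * V) * Matrix.diagonal hH.eigenvalues * (Vᵀ * V) := by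
          simp only [Matrix.mul_assoc]
      _ = Matrix.diagonal hH.eigenvalues := by rw [hVunit, Matrix.one_mul, Matrix.mul_one]
  have := aux_key_ineq hd P Q hPunit
  rw [hPQ, hQQ] at this
  simpa [nuclearNorm, Matrix.diagonal_apply_eq, ← hHdef] using this

/-- Trace formula for the measurement matrices. -/
lemma aux_trace_formula {d1 d2 : ℕ} (hd : d1 ≤ d2)
    (Φ : Matrix (Fin d1) (Fin d1) ℝ) (Ψ : Matrix (Fin d2) (Fin d2) ℝ)
    (v : Fin d1 → ℝ) (X : Matrix (Fin d1) (Fin d2) ℝ) :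
    Matrix.trace ((Φ * rectDiag v * Ψᵀ)ᵀ * X)
      = ∑ j : Fin d1, v j * (Φᵀ * X * Ψ) j (Fin.castLE hd j) := by
  have h1 : (Φ * rectDiag v * Ψᵀ)ᵀ * X = Ψ * ((rectDiag (d2 := d2) v)ᵀ * (Φᵀ * X)) := by
    change (Φ * rectDiag (d2 := d2) v * Ψᵀ)ᵀ * X = _
    rw [Matrix.transpose_mul, Matrix.transpose_mul, Matrix.transpose_transpose]
    simp only [Matrix.mul_assoc]
  rw [h1, Matrix.trace_mul_comm]
  have h2 : (rectDiag (d2 := d2) v)ᵀ * (Φᵀ * X) * Ψ = (rectDiag v)ᵀ * (Φᵀ * X * Ψ) := by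
    simp only [Matrix.mul_assoc]
  rw [h2]
  rw [Matrix.trace]
  have h3 : ∀ l : Fin d2, ((rectDiag v)ᵀ * (Φᵀ * X * Ψ)).diag l
      = ∑ j : Fin d1, (if (j : ℕ) = (l : ℕ) then v j else 0) * (Φᵀ * X * Ψ) j l := by
    intro l
    simp [Matrix.diag, Matrix.mul_apply, rectDiag, Matrix.transpose_apply]
  simp_rw [h3]
  rw [Finset.sum_comm]
  apply Finset.sum_congr rfl
  intro j _
  have key : ∀ l : Fin d2, ((j : ℕ) = (l : ℕ)) ↔ (Fin.castLE hd j = l) := by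
    intro l
    rw [Fin.ext_iff, Fin.coe_castLE]
  calc ∑ l : Fin d2, (if (j : ℕ) = (l : ℕ) then v j else 0) * (Φᵀ * X * Ψ) j l
      = ∑ l : Fin d2, (if Fin.castLE hd j = l then v j * (Φᵀ * X * Ψ) j l else 0) := by
        apply Finset.sum_congr rfl
        intro l _
        by_cases h : (j : ℕ) = (l : ℕ)
        · rw [if_pos h, if_pos ((key l).mp h)]
        · rw [if_neg h, if_neg (fun hc => h ((key l).mpr hc)), zero_mul]
    _ = v j * (Φᵀ * X * Ψ) j (Fin.castLE hd j) := by rw [Finset.sum_ite_eq]; simp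

/-- rectDiag times its transpose is the diagonal of squares. -/
lemma aux_rectDiag_mul_transpose {d1 d2 : ℕ} (hd : d1 ≤ d2) (v : Fin d1 → ℝ) :
    rectDiag (d2 := d2) v * (rectDiag v)ᵀ = Matrix.diagonal (fun j => v j ^ 2) := by
  ext i j
  simp only [Matrix.mul_apply, rectDiag, Matrix.transpose_apply, Matrix.of_apply]
  have key : ∀ l : Fin d2, ((i : ℕ) = (l : ℕ)) ↔ (Fin.castLE hd i = l) := by
    intro l
    rw [Fin.ext_iff, Fin.coe_castLE]
  calc ∑ l : Fin d2, (if (i : ℕ) = (l : ℕ) then v i else 0) *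
        (if (j : ℕ) = (l : ℕ) then v j else 0)
      = ∑ l : Fin d2, (if Fin.castLE hd i = l then
          v i * (if (j : ℕ) = (l : ℕ) then v j else 0) else 0) := by
        apply Finset.sum_congr rfl
        intro l _
        by_cases h : (i : ℕ) = (l : ℕ)
        · rw [if_pos h, if_pos ((key l).mp h)]
        · rw [if_neg h, if_neg (fun hc => h ((key l).mpr hc)), zero_mul]
    _ = v i * (if (j : ℕ) = (i : ℕ) then v j else 0) := by rw [Finset.sum_ite_eq]; simp
    _ = Matrix.diagonal (fun j => v j ^ 2) i j := by
        by_cases h : i = j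
        · subst h; simp [sq]
        · have h' : (j : ℕ) ≠ (i : ℕ) := fun hc => h (Fin.ext hc.symm)
          simp [h', Matrix.diagonal_apply_ne _ h]

/-- Theorem 3(b): the spectral limit `X∞ = Φ Diag(σ*) Ψᵀ` is a global minimizer of the
nuclear norm over all matrices consistent with the measurements. -/
theorem spectral_limit_minimizes_nuclear_norm
    {d1 d2 m : ℕ} (hd : d1 ≤ d2)
    (Φ : Matrix (Fin d1) (Fin d1) ℝ) (Ψ : Matrix (Fin d2) (Fin d2) ℝ)
    (hΦ : Φᵀ * Φ = 1) (hΨ : Ψᵀ * Ψ = 1)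
    (σmeas : Fin m → Fin d1 → ℝ) (hσmeas : ∀ i j, 0 ≤ σmeas i j)
    (A : Fin m → Matrix (Fin d1) (Fin d2) ℝ)
    (hA : ∀ i, A i = Φ * rectDiag (σmeas i) * Ψᵀ)
    (a : Fin m → ℝ) (ha : ∀ j : Fin d1, ∑ i : Fin m, a i * σmeas i j = 1)
    (Xstar : Matrix (Fin d1) (Fin d2) ℝ)
    (σstar : Fin d1 → ℝ)
    (hσstar : ∀ j : Fin d1, σstar j = (Φᵀ * Xstar * Ψ) j (Fin.castLE hd j))
    (hσstar_pos : ∀ j, 0 < σstar j)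
    (y : Fin m → ℝ) (hy : ∀ i, y i = Matrix.trace ((A i)ᵀ * Xstar))
    (Xinf : Matrix (Fin d1) (Fin d2) ℝ)
    (hXinf : Xinf = Φ * rectDiag σstar * Ψᵀ) :
    (∀ i, Matrix.trace ((A i)ᵀ * Xinf) = y i) ∧
    (∀ X : Matrix (Fin d1) (Fin d2) ℝ,
      (∀ i, Matrix.trace ((A i)ᵀ * X) = y i) → nuclearNorm Xinf ≤ nuclearNorm X) := by
  have hΦ' : Φ * Φᵀ = 1 := mul_eq_one_comm.mp hΦ
  have hΨ' : Ψ * Ψᵀ = 1 := mul_eq_one_comm.mp hΨ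
  -- the rotated diagonal of Xinf is σstar
  have hMinf : Φᵀ * Xinf * Ψ = rectDiag σstar := by
    rw [hXinf]
    change Φᵀ * (Φ * rectDiag (d2 := d2) σstar * Ψᵀ) * Ψ = _
    simp only [← Matrix.mul_assoc]
    rw [hΦ, Matrix.one_mul, Matrix.mul_assoc, hΨ, Matrix.mul_one]
  have hfinf : ∀ j : Fin d1, (Φᵀ * Xinf * Ψ) j (Fin.castLE hd j) = σstar j := by
    intro j
    rw [hMinf]
    simp [rectDiag]
  -- trace formula
  have htr : ∀ i (X : Matrix (Fin d1) (Fin d2) ℝ),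
      Matrix.trace ((A i)ᵀ * X)
        = ∑ j : Fin d1, σmeas i j * (Φᵀ * X * Ψ) j (Fin.castLE hd j) := by
    intro i X
    rw [hA i]
    exact aux_trace_formula hd Φ Ψ (σmeas i) X
  have hy' : ∀ i, y i = ∑ j : Fin d1, σmeas i j * σstar j := by
    intro i
    rw [hy i, htr]
    exact Finset.sum_congr rfl fun j _ => by rw [← hσstar j]
  constructor
  · intro i
    rw [htr i Xinf, hy' i]
    exact Finset.sum_congr rfl fun j _ => by rw [hfinf j]
  · intro X hX
    -- feasibility implies the rotated diagonal sum is fixed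
    have hsum : ∑ j : Fin d1, (Φᵀ * X * Ψ) j (Fin.castLE hd j) = ∑ j : Fin d1, σstar j := by
      have h1 : ∑ i : Fin m, a i * y i
          = ∑ j : Fin d1, (Φᵀ * X * Ψ) j (Fin.castLE hd j) := by
        calc ∑ i : Fin m, a i * y i
            = ∑ i : Fin m, a i * ∑ j : Fin d1, σmeas i j * (Φᵀ * X * Ψ) j (Fin.castLE hd j) := by
              exact Finset.sum_congr rfl fun i _ => by rw [← hX i, htr i X]
          _ = ∑ j : Fin d1, (∑ i : Fin m, a i * σmeas i j) *
                (Φᵀ * X * Ψ) j (Fin.castLE hd j) := by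
              simp_rw [Finset.mul_sum, Finset.sum_mul]
              rw [Finset.sum_comm]
              exact Finset.sum_congr rfl fun j _ => Finset.sum_congr rfl fun i _ => by ring
          _ = ∑ j : Fin d1, (Φᵀ * X * Ψ) j (Fin.castLE hd j) := by
              exact Finset.sum_congr rfl fun j _ => by rw [ha j, one_mul]
      have h2 : ∑ i : Fin m, a i * y i = ∑ j : Fin d1, σstar j := by
        calc ∑ i : Fin m, a i * y i
            = ∑ i : Fin m, a i * ∑ j : Fin d1, σmeas i j * σstar j := by
              exact Finset.sum_congr rfl fun i _ => by rw [hy' i]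
          _ = ∑ j : Fin d1, (∑ i : Fin m, a i * σmeas i j) * σstar j := by
              simp_rw [Finset.mul_sum, Finset.sum_mul]
              rw [Finset.sum_comm]
              exact Finset.sum_congr rfl fun j _ => Finset.sum_congr rfl fun i _ => by ring
          _ = ∑ j : Fin d1, σstar j := by
              exact Finset.sum_congr rfl fun j _ => by rw [ha j, one_mul]
      rw [← h1, h2]
    -- nuclearNorm Xinf = ∑ σstar
    have hnn : nuclearNorm Xinf = ∑ j : Fin d1, σstar j := by
      set hH := (Matrix.posSemidef_self_mul_conjTranspose Xinf).1 with hHdef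
      have hHeq : Xinf * Xinfᴴ = Φ * Matrix.diagonal (fun j => σstar j ^ 2) * Φᵀ := by
        rw [Matrix.conjTranspose_eq_transpose_of_trivial, hXinf]
        change Φ * rectDiag (d2 := d2) σstar * Ψᵀ * (Φ * rectDiag (d2 := d2) σstar * Ψᵀ)ᵀ = _
        rw [Matrix.transpose_mul, Matrix.transpose_mul, Matrix.transpose_transpose]
        simp only [← Matrix.mul_assoc]
        rw [Matrix.mul_assoc (Φ * rectDiag σstar) Ψᵀ Ψ, hΨ, Matrix.mul_one,
          Matrix.mul_assoc Φ (rectDiag (d2 := d2) σstar) (rectDiag (d2 := d2) σstar)ᵀ,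
          show rectDiag (d2 := d2) σstar * (rectDiag (d2 := d2) σstar)ᵀ
            = Matrix.diagonal (fun j => σstar j ^ 2) from aux_rectDiag_mul_transpose hd σstar]
      have hms := aux_eig_multiset Φ (fun j => σstar j ^ 2) hΦ hH hHeq
      have hsqrt : ∑ i : Fin d1, Real.sqrt (hH.eigenvalues i)
          = ∑ j : Fin d1, Real.sqrt (σstar j ^ 2) := by
        have e1 : ∑ i : Fin d1, Real.sqrt (hH.eigenvalues i)
            = ((Finset.univ.val.map hH.eigenvalues).map Real.sqrt).sum := by
          rw [Multiset.map_map]; rfl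
        have e2 : ∑ j : Fin d1, Real.sqrt (σstar j ^ 2)
            = ((Finset.univ.val.map (fun j => σstar j ^ 2)).map Real.sqrt).sum := by
          rw [Multiset.map_map]; rfl
        rw [e1, e2, hms]
      rw [nuclearNorm]
      exact hsqrt.trans (Finset.sum_congr rfl fun j _ => Real.sqrt_sq (hσstar_pos j).le)
    rw [hnn, ← hsum]
    exact aux_diag_le_nuclearNorm hd Φ Ψ hΦ hΨ X
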